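/- Let p be a prime and let M be a separably closed field of characteristic p. Let A ⊆ M be a subfield that is definably closed in M with respect to the first-order language of rings: every element b ∈ M for which there exists a ring-language formula φ(x, ȳ) and a tuple ā from A such that b is the unique element of M satisfying φ(x, ā) already lies in A. Then the field extension M/A is separable. -/

import Mathlib

open FirstOrder Language FirstOrder.Ring

attribute [local instance] FirstOrder.Ring.compatibleRingOfRing

/-- `b` is definable over `A` in the `L`-structure `M`: there are an `L`-formula `ψ(x, ȳ)`
and a tuple `ā` from `A` such that `b` is the unique element of `M` satisfying `ψ(x, ā)`. -/
def IsDefinableOver (L : FirstOrder.Language) {M : Type*} [L.Structure M]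
    (A : Set M) (b : M) : Prop :=
  ∃ (n : ℕ) (ψ : L.Formula (Fin (n + 1))) (a : Fin n → M),
    (∀ i, a i ∈ A) ∧ ∀ y : M, ψ.Realize (Fin.cons y a) ↔ y = b

/-- A tuple `v` of elements of `M` is linearly independent over the subfield `S` of `M`. -/
def LinIndepOver {M : Type*} [Field M] (S : Subfield M) {n : ℕ} (v : Fin n → M) : Prop :=
  ∀ c : Fin n → M, (∀ i, c i ∈ S) → ∑ i, c i * v i = 0 → ∀ i, c i = 0

/-- The extension `M / A` is separable: `A` is linearly disjoint from `M ^ p` over `A ^ p`,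
i.e. every tuple from `A` which is linearly independent over `A ^ p` remains linearly
independent over `M ^ p`. -/
def IsSepExt (p : ℕ) {M : Type*} [Field M] [ExpChar M p] (A : Subfield M) : Prop :=
  ∀ (n : ℕ) (v : Fin n → M), (∀ i, v i ∈ A) →
    LinIndepOver (A.map (frobenius M p)) v → LinIndepOver (frobenius M p).fieldRange v

noncomputable def srourFormula (p n : ℕ) (S : Finset (Fin n)) (i0 i : Fin n) :
    Language.ring.Formula (Fin (n + 1)) :=
  (((termOfFreeCommRing (∑ j : Fin n,
        FreeCommRing.of (Sum.inr j : Fin (n+1) ⊕ Fin n) ^ p *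
          FreeCommRing.of (Sum.inl j.succ))).bdEqual (termOfFreeCommRing 0) ⊓
    ((termOfFreeCommRing (FreeCommRing.of (Sum.inr i0))).bdEqual (termOfFreeCommRing 1) ⊓
    (BoundedFormula.iInf (fun j : ↥(Sᶜ : Finset (Fin n)) =>
      (termOfFreeCommRing (FreeCommRing.of (Sum.inr (j : Fin n)))).bdEqual (termOfFreeCommRing 0)) ⊓
    (termOfFreeCommRing (FreeCommRing.of (Sum.inl 0))).bdEqual
      (termOfFreeCommRing (FreeCommRing.of (Sum.inr i))))))).exs

theorem srourFormula_realize (p n : ℕ) (S : Finset (Fin n)) (i0 i : Fin n)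
    {M : Type*} [Field M] (w : Fin (n + 1) → M) :
    (srourFormula p n S i0 i).Realize w ↔
      ∃ xs : Fin n → M, (∑ j, xs j ^ p * w j.succ = 0) ∧ xs i0 = 1 ∧
        (∀ j ∉ S, xs j = 0) ∧ w 0 = xs i := by
  simp [srourFormula, BoundedFormula.realize_exs, BoundedFormula.realize_iInf, BoundedFormula.realize_bdEqual,
    realize_termOfFreeCommRing, map_sum, map_mul, map_pow, FreeCommRing.lift_of,
    Finset.mem_compl]

theorem srour_key (p : ℕ) [Fact p.Prime] (M : Type*) [Field M] [CharP M p]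
    (A : Subfield M)
    (hdc : ∀ b : M, IsDefinableOver Language.ring (A : Set M) b → b ∈ A)
    (n : ℕ) (v : Fin n → M) (hv : ∀ i, v i ∈ A)
    (hli : LinIndepOver (A.map (frobenius M p)) v) :
    ∀ d : Fin n → M, ∑ j, d j ^ p * v j = 0 → d = 0 := by
  classical
  suffices H : ∀ k, ∀ d : Fin n → M,
      (Finset.univ.filter fun j => d j ≠ 0).card ≤ k → ∑ j, d j ^ p * v j = 0 → d = 0 by
    exact fun d hd => H _ d le_rfl hd
  intro k
  induction k with
  | zero =>
    intro d hcard _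
    funext j
    show d j = 0
    by_contra hj
    have : j ∈ Finset.univ.filter fun j => d j ≠ 0 := by simp [hj]
    have := Finset.card_pos.2 ⟨j, this⟩
    omega
  | succ k IH =>
    intro d hcard hrel
    by_contra hd0
    obtain ⟨i0, hi0⟩ : ∃ i0, d i0 ≠ 0 := by
      by_contra h
      push_neg at h
      exact hd0 (funext h)
    -- normalize
    set e : Fin n → M := fun j => d j * (d i0)⁻¹ with he
    have hei0 : e i0 = 1 := mul_inv_cancel₀ hi0
    have hesupp : ∀ j, d j = 0 → e j = 0 := fun j hj => by simp [he, hj]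
    have herel : ∑ j, e j ^ p * v j = 0 := by
      have : ∑ j, e j ^ p * v j = ((d i0)⁻¹) ^ p * ∑ j, d j ^ p * v j := by
        rw [Finset.mul_sum]
        refine Finset.sum_congr rfl fun j _ => by ring
      rw [this, hrel, mul_zero]
    set S : Finset (Fin n) := Finset.univ.filter fun j => d j ≠ 0 with hS
    -- uniqueness of e
    have huniq : ∀ f : Fin n → M, (∑ j, f j ^ p * v j = 0) → f i0 = 1 →
        (∀ j ∉ S, f j = 0) → f = e := by
      intro f hfrel hfi0 hfsupp
      have hg : ∀ j, (e j - f j) ^ p * v j = (e j ^ p * v j) - (f j ^ p * v j) := by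
        intro j
        rw [sub_pow_char, sub_mul]
      have hgrel : ∑ j, (e j - f j) ^ p * v j = 0 := by
        simp only [hg, Finset.sum_sub_distrib, hfrel, herel, sub_zero]
      have hsub : (Finset.univ.filter fun j => (e j - f j) ≠ 0) ⊆ S.erase i0 := by
        intro j hj
        simp only [Finset.mem_filter, Finset.mem_univ, true_and] at hj
        rw [Finset.mem_erase]
        constructor
        · rintro rfl
          exact hj (by rw [hei0, hfi0, sub_self])
        · by_contra hjS
          exact hj (by rw [hesupp j (by simpa [hS] using hjS), hfsupp j hjS, sub_self])
      have hcard' : (Finset.univ.filter fun j => (e j - f j) ≠ 0).card ≤ k := by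
        have h1 : (S.erase i0).card < S.card :=
          Finset.card_erase_lt_of_mem (by simp [hS, hi0])
        have h2 := Finset.card_le_card hsub
        omega
      have := IH _ hcard' hgrel
      funext j
      have h := congrFun this j
      simp only [Pi.zero_apply] at h
      exact (sub_eq_zero.1 h).symm
    -- definability: each e i is in A
    have heA : ∀ i, e i ∈ A := by
      intro i
      apply hdc
      refine ⟨n, srourFormula p n S i0 i, v, hv, fun y => ?_⟩
      rw [srourFormula_realize]
      constructor
      · rintro ⟨xs, h1, h2, h3, h4⟩
        have h1' : ∑ j, xs j ^ p * v j = 0 := by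
          simpa [Fin.cons_succ] using h1
        have := huniq xs h1' h2 h3
        rw [show (Fin.cons y v : Fin (n+1) → M) 0 = y from rfl] at h4
        rw [h4, this]
      · rintro rfl
        exact ⟨e, by simpa [Fin.cons_succ] using herel, hei0, fun j hj => by
          simpa [hS] using hesupp j (by simpa [hS] using hj), rfl⟩
    -- contradiction with linear independence over A^p
    have : ∀ j, e j ^ p = 0 := by
      have := hli (fun j => e j ^ p) (fun j => ⟨e j, heA j, rfl⟩) herel
      exact this
    have := pow_eq_zero_iff (n := p) (Fact.out (p := p.Prime)).pos.ne' |>.1 (this i0)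
    rw [hei0] at this
    exact one_ne_zero this


/-- Srour's Lemma 0: if `M` is a separably closed field of characteristic `p` and `A ⊆ M`
is a subfield that is definably closed in `M` with respect to the language of rings, then
the extension `M / A` is separable. -/
theorem sepClosed_separable_over_dclClosed
    (p : ℕ) [Fact p.Prime] (M : Type*) [Field M] [CharP M p] [IsSepClosed M]
    (A : Subfield M)
    (hdc : ∀ b : M, IsDefinableOver Language.ring (A : Set M) b → b ∈ A) :
    IsSepExt p A := by
  intro n v hv hli c hc hsum i
  choose d hd using fun j => RingHom.mem_fieldRange.1 (hc j)
  have hdp : ∀ j, d j ^ p = c j := fun j => by rw [← hd j, frobenius_def]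
  have hrel : ∑ j, d j ^ p * v j = 0 := by
    simpa only [hdp] using hsum
  have hd0 := srour_key p M A hdc n v hv hli d hrel
  rw [← hdp i, congrFun hd0 i]
  simp [(Fact.out : p.Prime).ne_zero]
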